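/- Let A, A_k be real n×n matrices, B₁ a real n×m matrix, B₂ a real n×r matrix, B_k a real n×m matrix, C₁, C₂ real m×n matrices, C_k a real r×n matrix, and D₂₁ a real m×m matrix. Set R = C₁·B₁ + B₁ᵀ·C₁ᵀ and assume R is invertible. Define A_c = [[A, B₂·C_k],[B_k·C₂, A_k]], B_c = [B₁; B_k·D₂₁], C_c = [C₁, 0]. Suppose the real symmetric 2n×2n matrix Σ = [[Σ₁₁, Σ₁₂],[Σ₁₂ᵀ, Σ₂₂]] (blocks n×n) is positive definite and satisfies Σ·A_c + A_cᵀ·Σ + (B_cᵀ·Σ − C_c·A_c)ᵀ·R⁻¹·(B_cᵀ·Σ − C_c·A_c) = 0. Define Ē = Σ₁₁⁻¹·Σ₁₂, L = Ē·B_k, and Z = Σ₁₁⁻¹. Then Z is symmetric positive definite and satisfies Z·(A + L·C₂)ᵀ + (A + L·C₂)·Z + Q̄·R⁻¹·Q̄ᵀ = 0, where Q̄ = B₁ + L·D₂₁ − Z·Aᵀ·C₁ᵀ. -/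

import Mathlib

open Matrix

/-- Second half of the necessity part of the NI output feedback synthesis
theorem: from a positive definite solution `Σ` of the closed-loop NI ARE, the matrix
`Z = S₁₁⁻¹` is positive definite and solves the output-injection Riccati equation with
injection gain `L = Ē·B_k`, `Ē = S₁₁⁻¹S₁₂`. -/
theorem stmt_11 {n m r : ℕ}
    (A Ak : Matrix (Fin n) (Fin n) ℝ)
    (B₁ Bk : Matrix (Fin n) (Fin m) ℝ) (B₂ : Matrix (Fin n) (Fin r) ℝ)
    (C₁ C₂ : Matrix (Fin m) (Fin n) ℝ) (Ck : Matrix (Fin r) (Fin n) ℝ)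
    (D₂₁ : Matrix (Fin m) (Fin m) ℝ)
    (R : Matrix (Fin m) (Fin m) ℝ) (hR : R = C₁ * B₁ + B₁ᵀ * C₁ᵀ) (hRu : IsUnit R.det)
    (Ac : Matrix (Fin n ⊕ Fin n) (Fin n ⊕ Fin n) ℝ)
    (hAc : Ac = fromBlocks A (B₂ * Ck) (Bk * C₂) Ak)
    (Bc : Matrix (Fin n ⊕ Fin n) (Fin m) ℝ) (hBc : Bc = fromRows B₁ (Bk * D₂₁))
    (Cc : Matrix (Fin m) (Fin n ⊕ Fin n) ℝ) (hCc : Cc = fromCols C₁ 0)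
    (S₁₁ S₁₂ S₂₂ : Matrix (Fin n) (Fin n) ℝ)
    (Sg : Matrix (Fin n ⊕ Fin n) (Fin n ⊕ Fin n) ℝ)
    (hSg : Sg = fromBlocks S₁₁ S₁₂ S₁₂ᵀ S₂₂) (hSgpd : Sg.PosDef)
    (hric : Sg * Ac + Acᵀ * Sg + (Bcᵀ * Sg - Cc * Ac)ᵀ * R⁻¹ * (Bcᵀ * Sg - Cc * Ac) = 0)
    (Eb : Matrix (Fin n) (Fin n) ℝ) (hEb : Eb = S₁₁⁻¹ * S₁₂)
    (L : Matrix (Fin n) (Fin m) ℝ) (hL : L = Eb * Bk)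
    (Z : Matrix (Fin n) (Fin n) ℝ) (hZ : Z = S₁₁⁻¹)
    (Qb : Matrix (Fin n) (Fin m) ℝ) (hQb : Qb = B₁ + L * D₂₁ - Z * Aᵀ * C₁ᵀ) :
    Z.PosDef ∧
    Z * (A + L * C₂)ᵀ + (A + L * C₂) * Z + Qb * R⁻¹ * Qbᵀ = 0 := by
  subst hSg hAc hBc hCc
  -- S₁₁ is positive definite
  have hpd : S₁₁.PosDef := by
    refine PosDef.of_dotProduct_mulVec_pos ?_ ?_
    · have h1 := hSgpd.1
      rw [isHermitian_fromBlocks_iff] at h1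
      exact h1.1
    · intro x hx
      have hne : Sum.elim x (0 : Fin n → ℝ) ≠ 0 := fun hc =>
        hx (funext fun i => congrFun hc (Sum.inl i))
      have h2 := hSgpd.dotProduct_mulVec_pos hne
      simpa [fromBlocks_mulVec, dotProduct] using h2
  have hZpd : Z.PosDef := hZ ▸ hpd.inv
  refine ⟨hZpd, ?_⟩
  have hdet : IsUnit S₁₁.det := isUnit_iff_ne_zero.mpr hpd.det_pos.ne'
  have hZ2 : Z * S₁₁ = 1 := by rw [hZ]; exact nonsing_inv_mul _ hdet
  have hZ1 : S₁₁ * Z = 1 := by rw [hZ]; exact mul_nonsing_inv _ hdet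
  have hS11s : S₁₁ᵀ = S₁₁ := hpd.1
  have hZs : Zᵀ = Z := by rw [hZ, transpose_nonsing_inv, hS11s]
  rw [← hZ] at hEb
  -- extract the (1,1) block of the Riccati equation
  set W₁ : Matrix (Fin m) (Fin n) ℝ := B₁ᵀ * S₁₁ + (Bk * D₂₁)ᵀ * S₁₂ᵀ - C₁ * A with hW₁
  have E11 : S₁₁ * A + S₁₂ * (Bk * C₂) + (Aᵀ * S₁₁ + (Bk * C₂)ᵀ * S₁₂ᵀ)
      + W₁ᵀ * R⁻¹ * W₁ = 0 := by
    have hcols : (fromRows B₁ (Bk * D₂₁))ᵀ * fromBlocks S₁₁ S₁₂ S₁₂ᵀ S₂₂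
        - fromCols C₁ (0 : Matrix (Fin m) (Fin n) ℝ) * fromBlocks A (B₂ * Ck) (Bk * C₂) Ak
        = fromCols W₁ (B₁ᵀ * S₁₂ + (Bk * D₂₁)ᵀ * S₂₂ - C₁ * (B₂ * Ck)) := by
      rw [transpose_fromRows, fromCols_mul_fromBlocks, fromCols_mul_fromBlocks, hW₁]
      ext i (j | j) <;> simp [fromCols]
    rw [hcols] at hric
    rw [transpose_fromCols, fromRows_mul, fromRows_mul_fromCols, fromBlocks_multiply,
      fromBlocks_transpose, fromBlocks_multiply, fromBlocks_add, fromBlocks_add,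
      ← fromBlocks_zero] at hric
    have h11 := congrArg toBlocks₁₁ hric
    simp only [toBlocks_fromBlocks₁₁] at h11
    rw [← h11]
  -- Qb = Z * W₁ᵀ
  have hQbZ : Qb = Z * W₁ᵀ := by
    rw [hQb, hL, hEb, hW₁]
    simp only [transpose_sub, transpose_add, transpose_mul, transpose_transpose, hS11s,
      Matrix.mul_sub, Matrix.mul_add, ← Matrix.mul_assoc]
    rw [hZ2, Matrix.one_mul]
  have hQbT : Qbᵀ = W₁ * Z := by
    rw [hQbZ, transpose_mul, transpose_transpose, hZs]
  -- conclude
  have key := congrArg (fun M => Z * M * Z) E11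
  simp only [Matrix.mul_zero, Matrix.zero_mul, Matrix.mul_add, Matrix.add_mul,
    Matrix.mul_assoc] at key
  simp only [← Matrix.mul_assoc Z S₁₁, hZ2, Matrix.one_mul] at key
  simp only [hZ1, Matrix.mul_one] at key
  simp only [transpose_mul, Matrix.mul_assoc] at key
  rw [hQbT, hQbZ, hL, hEb]
  simp only [transpose_add, transpose_mul, hZs, Matrix.add_mul, Matrix.mul_add,
    Matrix.mul_assoc]
  rw [← key]
  abel
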